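/- If moreover each row (s_{j,1},…,s_{j,2m}) comes from a symplectic matrix (so that the creation-operator part (s_{j,1},…,s_{j,m}) is nonzero), then the vector L_n⋯L_1|0⟩^{⊗m} has a nonzero component on some Fock state of total photon number exactly n; equivalently, the leading total-degree-n part of its stellar function is Π_{j=1}^n (Σ_{l=1}^m s_{j,l} z_l), which is a nonzero polynomial as a product of nonzero linear forms. -/

import Mathlib

open scoped Classical

/-- Creation operator `a_k†` on Fock coefficients: `(a_k† ψ)(n) = √(n_k) ψ(n − 1_k)`,
and `0` when `n_k = 0`. -/
noncomputable def create (m : ℕ) (k : Fin m) (ψ : (Fin m → ℕ) → ℂ) :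
    (Fin m → ℕ) → ℂ :=
  fun n => if n k = 0 then 0
    else (Real.sqrt (n k) : ℂ) * ψ (Function.update n k (n k - 1))

/-- Annihilation operator `a_k` on Fock coefficients:
`(a_k ψ)(n) = √(n_k + 1) ψ(n + 1_k)`. -/
noncomputable def annihilate (m : ℕ) (k : Fin m) (ψ : (Fin m → ℕ) → ℂ) :
    (Fin m → ℕ) → ℂ :=
  fun n => (Real.sqrt (n k + 1) : ℂ) * ψ (Function.update n k (n k + 1))

/-- Affine combination of ladder operators
`L = d + Σ_l (s_l a_l† + t_l a_l)` acting on Fock coefficients. -/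
noncomputable def affineLadder (m : ℕ) (d : ℂ) (s t : Fin m → ℂ)
    (ψ : (Fin m → ℕ) → ℂ) : (Fin m → ℕ) → ℂ :=
  fun n => d * ψ n + (∑ l, s l * create m l ψ n) + ∑ l, t l * annihilate m l ψ n

/-- The `m`-mode vacuum. -/
noncomputable def vacuum (m : ℕ) : (Fin m → ℕ) → ℂ :=
  fun n => if n = fun _ => 0 then 1 else 0

/-- `L_j ⋯ L_1 |0⟩` for `j` affine combinations of ladder operators. -/
noncomputable def appliedLadders (m : ℕ) (d : ℕ → ℂ) (s t : ℕ → Fin m → ℂ) :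
    ℕ → ((Fin m → ℕ) → ℂ)
  | 0 => vacuum m
  | j + 1 => affineLadder m (d j) (s j) (t j) (appliedLadders m d s t j)

-- sum of an updated tuple
lemma sum_update_eq {m : ℕ} (p : Fin m → ℕ) (l : Fin m) (v : ℕ) :
    ∑ i, Function.update p l v i = (∑ i, p i) - p l + v := by
  rw [Finset.sum_update_of_mem (Finset.mem_univ l)]
  have h : ∑ i, p i = p l + ∑ x ∈ Finset.univ \ {l}, p x := by
    rw [← Finset.sum_update_of_mem (Finset.mem_univ l) p (p l)]
    simp [Function.update_eq_self]
  omega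

lemma appliedLadders_support (m : ℕ) (d : ℕ → ℂ) (s t : ℕ → Fin m → ℂ) :
    ∀ n (p : Fin m → ℕ), n < ∑ i, p i → appliedLadders m d s t n p = 0 := by
  intro n
  induction n with
  | zero =>
    intro p hp
    have : p ≠ fun _ => 0 := by
      intro h; rw [h] at hp; simp at hp
    simp [appliedLadders, vacuum, this]
  | succ n ih =>
    intro p hp
    have h1 : appliedLadders m d s t n p = 0 := ih p (by omega)
    simp only [appliedLadders, affineLadder, h1, mul_zero, zero_add]
    rw [Finset.sum_eq_zero, Finset.sum_eq_zero, add_zero]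
    · intro l _
      have : appliedLadders m d s t n (Function.update p l (p l + 1)) = 0 := by
        apply ih; rw [sum_update_eq]; omega
      simp [annihilate, this]
    · intro l _
      rcases Nat.eq_zero_or_pos (p l) with h | h
      · simp [create, h]
      · have : appliedLadders m d s t n (Function.update p l (p l - 1)) = 0 := by
          apply ih; rw [sum_update_eq]; omega
        simp [create, this]

lemma key (m : ℕ) (d : ℕ → ℂ) (s t : ℕ → Fin m → ℂ) :
    ∀ n (z : Fin m → ℂ),
      (∑ p ∈ Finset.Nat.antidiagonalTuple m n,
          appliedLadders m d s t n p
            / (Real.sqrt (∏ i, ((p i).factorial : ℝ)) : ℂ) * ∏ i, z i ^ p i)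
        = ∏ j ∈ Finset.range n, ∑ l, s j l * z l := by
  intro n
  induction n with
  | zero =>
    intro z
    rw [Finset.Nat.antidiagonalTuple_zero_right]
    have h0 : (0 : Fin m → ℕ) = fun _ => 0 := rfl
    simp [appliedLadders, vacuum, h0]
  | succ n ih =>
    intro z
    rw [Finset.prod_range_succ, ← ih z]
    -- rewrite each term using only the creation part
    have step1 : ∀ p ∈ Finset.Nat.antidiagonalTuple m (n + 1),
        appliedLadders m d s t (n+1) p
            / (Real.sqrt (∏ i, ((p i).factorial : ℝ)) : ℂ) * ∏ i, z i ^ p i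
        = ∑ l, s n l * (create m l (appliedLadders m d s t n) p
            / (Real.sqrt (∏ i, ((p i).factorial : ℝ)) : ℂ) * ∏ i, z i ^ p i) := by
      intro p hp
      rw [Finset.Nat.mem_antidiagonalTuple] at hp
      have h0 : appliedLadders m d s t n p = 0 :=
        appliedLadders_support m d s t n p (by omega)
      have h2 : ∀ l : Fin m, annihilate m l (appliedLadders m d s t n) p = 0 := by
        intro l
        have : appliedLadders m d s t n (Function.update p l (p l + 1)) = 0 := by
          apply appliedLadders_support; rw [sum_update_eq]; omega
        simp [annihilate, this]
      simp only [appliedLadders, affineLadder, h0, mul_zero, zero_add, h2, add_zero,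
        Finset.sum_const_zero, Finset.sum_div, Finset.sum_mul, mul_div_assoc, mul_assoc]
    rw [Finset.sum_congr rfl step1, Finset.sum_comm]
    -- per-l reindexing
    have step2 : ∀ l : Fin m,
        (∑ p ∈ Finset.Nat.antidiagonalTuple m (n + 1),
          create m l (appliedLadders m d s t n) p
            / (Real.sqrt (∏ i, ((p i).factorial : ℝ)) : ℂ) * ∏ i, z i ^ p i)
        = z l * ∑ q ∈ Finset.Nat.antidiagonalTuple m n,
            appliedLadders m d s t n q
              / (Real.sqrt (∏ i, ((q i).factorial : ℝ)) : ℂ) * ∏ i, z i ^ q i := by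
      intro l
      rw [Finset.mul_sum]
      rw [← Finset.sum_filter_of_ne
        (p := fun p => p l ≠ 0)
        (f := fun p => create m l (appliedLadders m d s t n) p
            / (Real.sqrt (∏ i, ((p i).factorial : ℝ)) : ℂ) * ∏ i, z i ^ p i)]
      · refine Finset.sum_nbij' (fun p => Function.update p l (p l - 1))
          (fun q => Function.update q l (q l + 1)) ?_ ?_ ?_ ?_ ?_
        · intro a ha
          simp only [Finset.mem_filter, Finset.Nat.mem_antidiagonalTuple] at ha
          have hle : a l ≤ ∑ i, a i :=
            Finset.single_le_sum (fun i _ => Nat.zero_le _) (Finset.mem_univ l)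
          rw [Finset.Nat.mem_antidiagonalTuple, sum_update_eq]; omega
        · intro a ha
          rw [Finset.Nat.mem_antidiagonalTuple] at ha
          simp only [Finset.mem_filter, Finset.Nat.mem_antidiagonalTuple]
          have hle : a l ≤ ∑ i, a i :=
            Finset.single_le_sum (fun i _ => Nat.zero_le _) (Finset.mem_univ l)
          constructor
          · rw [sum_update_eq]; omega
          · simp
        · intro a ha
          simp only [Finset.mem_filter] at ha
          rw [Function.update_self, Function.update_idem, Nat.sub_add_cancel (by omega),
            Function.update_eq_self]
        · intro a _
          rw [Function.update_self, Function.update_idem, Nat.add_sub_cancel,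
            Function.update_eq_self]
        · intro a ha
          simp only [Finset.mem_filter, Finset.Nat.mem_antidiagonalTuple] at ha
          obtain ⟨-, hal⟩ := ha
          set q := Function.update a l (a l - 1) with hq
          have hql : q l = a l - 1 := Function.update_self _ _ _
          -- create value
          have hcre : create m l (appliedLadders m d s t n) a
              = (Real.sqrt (a l) : ℂ) * appliedLadders m d s t n q := by
            simp [create, hal, hq]
          -- factorial product
          have hfac : (∏ i, ((a i).factorial : ℝ))
              = (a l) * ∏ i, ((q i).factorial : ℝ) := by
            rw [← Finset.mul_prod_erase Finset.univ _ (Finset.mem_univ l),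
                ← Finset.mul_prod_erase Finset.univ (fun i => ((q i).factorial : ℝ))
                  (Finset.mem_univ l)]
            have h1 : ∀ i ∈ Finset.univ.erase l, ((q i).factorial : ℝ) = ((a i).factorial : ℝ) := by
              intro i hi
              rw [hq, Function.update_of_ne (Finset.ne_of_mem_erase hi)]
            rw [Finset.prod_congr rfl h1, hql, ← mul_assoc]
            congr 1
            rw [show a l = (a l - 1) + 1 by omega, Nat.factorial_succ]
            push_cast
            ring
          have halpos : (0 : ℝ) < (a l : ℝ) := by exact_mod_cast Nat.pos_of_ne_zero hal
          have hal' : ((Real.sqrt (a l) : ℝ) : ℂ) ≠ 0 := by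
            rw [Complex.ofReal_ne_zero]
            exact (Real.sqrt_ne_zero' ).mpr halpos
          have hsq : ((Real.sqrt (∏ i, ((a i).factorial : ℝ)) : ℝ) : ℂ)
              = ((Real.sqrt (a l) : ℝ) : ℂ)
                * ((Real.sqrt (∏ i, ((q i).factorial : ℝ)) : ℝ) : ℂ) := by
            rw [hfac, Real.sqrt_mul (by positivity)]
            push_cast
            ring
          have hz : (∏ i, z i ^ a i) = z l * ∏ i, z i ^ q i := by
            rw [← Finset.mul_prod_erase Finset.univ _ (Finset.mem_univ l),
                ← Finset.mul_prod_erase Finset.univ (fun i => z i ^ q i)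
                  (Finset.mem_univ l)]
            have h1 : ∀ i ∈ Finset.univ.erase l, z i ^ q i = z i ^ a i := by
              intro i hi
              rw [hq, Function.update_of_ne (Finset.ne_of_mem_erase hi)]
            rw [Finset.prod_congr rfl h1, hql, ← mul_assoc]
            congr 1
            rw [show a l = (a l - 1) + 1 by omega, Nat.add_sub_cancel, pow_succ]
            ring
          rw [hcre, hsq, hz, mul_div_mul_left _ _ hal']
          ring
      · intro p _ hne
        intro h
        exact hne (by simp [create, h])
    simp only [← Finset.mul_sum]
    rw [Finset.sum_congr rfl fun l _ => by rw [step2 l]]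
    simp only [← mul_assoc]
    rw [← Finset.sum_mul]
    ring

/-- If each affine combination `L_j = d_j + Σ_l (s_{j,l} a_l† + t_{j,l} a_l)` has a
nonzero creation part (as is the case for rows of a symplectic matrix), then
`L_n ⋯ L_1 |0⟩^{⊗m}` has a nonzero component on some Fock state of total photon
number exactly `n`; equivalently, the leading total-degree-`n` part of its stellar
function `F⋆(z) = Σ_p (ψ_p/√(p!)) z^p` is the nonzero polynomial
`Π_{j=1}^n (Σ_{l=1}^m s_{j,l} z_l)`. -/
theorem appliedLadders_top_degree (m n : ℕ) (d : ℕ → ℂ) (s t : ℕ → Fin m → ℂ)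
    (hs : ∀ j < n, ∃ l, s j l ≠ 0) :
    (∃ p : Fin m → ℕ, (∑ i, p i) = n ∧ appliedLadders m d s t n p ≠ 0) ∧
    ∀ z : Fin m → ℂ,
      (∑' p : Fin m → ℕ,
          if (∑ i, p i) = n then
            appliedLadders m d s t n p
              / (Real.sqrt (∏ i, ((p i).factorial : ℝ)) : ℂ) * ∏ i, z i ^ p i
          else 0)
        = ∏ j ∈ Finset.range n, ∑ l, s j l * z l := by
  have htsum : ∀ z : Fin m → ℂ,
      (∑' p : Fin m → ℕ,
          if (∑ i, p i) = n then
            appliedLadders m d s t n p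
              / (Real.sqrt (∏ i, ((p i).factorial : ℝ)) : ℂ) * ∏ i, z i ^ p i
          else 0)
        = ∏ j ∈ Finset.range n, ∑ l, s j l * z l := by
    intro z
    rw [tsum_eq_sum (s := Finset.Nat.antidiagonalTuple m n)
      (by
        intro p hp
        rw [if_neg]
        intro h
        exact hp (Finset.Nat.mem_antidiagonalTuple.mpr h))]
    rw [← key m d s t n z]
    refine Finset.sum_congr rfl fun p hp => ?_
    rw [if_pos (Finset.Nat.mem_antidiagonalTuple.mp hp)]
  refine ⟨?_, htsum⟩
  set P : MvPolynomial (Fin m) ℂ :=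
    ∏ j ∈ Finset.range n, ∑ l, MvPolynomial.C (s j l) * MvPolynomial.X l with hP
  have hPne : P ≠ 0 := by
    rw [hP]
    rw [Finset.prod_ne_zero_iff]
    intro j hj
    obtain ⟨l, hl⟩ := hs j (Finset.mem_range.mp hj)
    intro h0
    have h1 := congrArg (MvPolynomial.eval (Pi.single l 1)) h0
    simp [MvPolynomial.eval_sum, Pi.single_apply, mul_ite, Finset.sum_ite_eq'] at h1
    exact hl h1
  obtain ⟨z, hz⟩ : ∃ z, MvPolynomial.eval z P ≠ 0 := by
    by_contra h
    push_neg at h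
    exact hPne (MvPolynomial.funext fun x => by simp [h x])
  have heval : MvPolynomial.eval z P = ∏ j ∈ Finset.range n, ∑ l, s j l * z l := by
    simp [hP, MvPolynomial.eval_prod, MvPolynomial.eval_sum]
  have hne : (∑ p ∈ Finset.Nat.antidiagonalTuple m n,
      appliedLadders m d s t n p
        / (Real.sqrt (∏ i, ((p i).factorial : ℝ)) : ℂ) * ∏ i, z i ^ p i) ≠ 0 := by
    rw [key m d s t n z, ← heval]
    exact hz
  obtain ⟨p, hp, hne2⟩ := Finset.exists_ne_zero_of_sum_ne_zero hne
  refine ⟨p, Finset.Nat.mem_antidiagonalTuple.mp hp, ?_⟩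
  intro h0
  exact hne2 (by simp [h0])
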